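/- Let λ > 0 and μ ≥ 0 be real numbers, let a < 0 be a real number, and let n ≥ 2 be an integer. Then ∫_{0}^{∞} [∑_{l=2}^{n} binom(n, l) (−(1 − 2a)λx)^{l−1}/(l−1)!] · e^{−((1−a)λ+μ)x}/(1 − e^{−x}) dx = ∑_{l=2}^{n} binom(n, l) (−(1 − 2a)λ)^{l−1} ∑_{m=0}^{∞} 1/(m + (1 − a)λ + μ)^{l}. -/

import Mathlib

open MeasureTheory Real Set

lemma integrableOn_pow_mul_exp (k : ℕ) {c : ℝ} (hc : 0 < c) :
    IntegrableOn (fun x : ℝ => x ^ k * Real.exp (-c * x)) (Set.Ioi 0) := by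
  have h := integrableOn_rpow_mul_exp_neg_mul_rpow (s := (k : ℝ)) (p := 1)
    (by exact_mod_cast neg_one_lt_zero.trans_le (Nat.cast_nonneg k)) zero_lt_one hc
  refine h.congr_fun (fun x hx => ?_) measurableSet_Ioi
  simp only [Real.rpow_one, Real.rpow_natCast]

lemma integral_pow_mul_exp (k : ℕ) {c : ℝ} (hc : 0 < c) :
    ∫ x in Set.Ioi (0:ℝ), x ^ k * Real.exp (-c * x) = (k.factorial : ℝ) / c ^ (k + 1) := by
  have h := integral_rpow_mul_exp_neg_mul_Ioi (a := (k : ℝ) + 1) (r := c) (by positivity) hc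
  rw [show ((k:ℝ) + 1 - 1) = (k:ℝ) by ring] at h
  have h2 : ∫ x in Set.Ioi (0:ℝ), x ^ k * Real.exp (-c * x)
      = ∫ t in Set.Ioi (0:ℝ), t ^ (k:ℝ) * Real.exp (-(c * t)) := by
    refine setIntegral_congr_fun measurableSet_Ioi (fun x hx => ?_)
    rw [Real.rpow_natCast, neg_mul]
  have hg : Real.Gamma ((k:ℝ) + 1) = (k.factorial : ℝ) := by
    exact_mod_cast Real.Gamma_nat_eq_factorial k
  rw [h2, h, hg, show ((k:ℝ)+1) = ((k+1 : ℕ) : ℝ) by push_cast; ring, Real.rpow_natCast,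
    div_pow, one_pow, div_mul_eq_mul_div, one_mul]

lemma summable_aux (k : ℕ) (hk : 1 ≤ k) {s : ℝ} (hs : 0 < s) :
    Summable (fun m : ℕ => 1 / ((m:ℝ) + s) ^ (k + 1)) := by
  have h := (Real.summable_one_div_nat_add_rpow s ((k:ℝ) + 1)).mpr
    (by exact_mod_cast Nat.lt_add_of_pos_left (Nat.lt_of_lt_of_le Nat.zero_lt_one hk))
  refine h.congr fun m => ?_
  rw [abs_of_pos (by positivity), show ((k:ℝ)+1) = ((k+1 : ℕ) : ℝ) by push_cast; ring,
    Real.rpow_natCast]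

lemma key_integral (k : ℕ) (hk : 1 ≤ k) {s : ℝ} (hs : 0 < s) :
    ∫ x in Set.Ioi (0:ℝ), x ^ k * Real.exp (-s * x) / (1 - Real.exp (-x))
      = (k.factorial : ℝ) * ∑' m : ℕ, 1 / ((m:ℝ) + s) ^ (k + 1) := by
  set F : ℕ → ℝ → ℝ := fun m x => x ^ k * Real.exp (-((m:ℝ) + s) * x) with hF
  have hFint : ∀ m : ℕ, IntegrableOn (F m) (Set.Ioi 0) :=
    fun m => integrableOn_pow_mul_exp k (by positivity)
  have hFval : ∀ m : ℕ, (∫ x in Set.Ioi (0:ℝ), F m x)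
      = (k.factorial : ℝ) / ((m:ℝ) + s) ^ (k + 1) :=
    fun m => integral_pow_mul_exp k (by positivity)
  have hFnorm : ∀ m : ℕ, (∫ x in Set.Ioi (0:ℝ), ‖F m x‖)
      = (k.factorial : ℝ) / ((m:ℝ) + s) ^ (k + 1) := by
    intro m
    rw [← hFval m]
    refine setIntegral_congr_fun measurableSet_Ioi (fun x hx => ?_)
    have hx0 : (0:ℝ) < x := hx
    rw [Real.norm_eq_abs, abs_of_nonneg
      (mul_nonneg (pow_nonneg hx0.le _) (Real.exp_nonneg _))]
  have hsum0 := summable_aux k hk hs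
  have hsum : Summable fun m : ℕ => ∫ x in Set.Ioi (0:ℝ), ‖F m x‖ :=
    (hsum0.mul_left (k.factorial : ℝ)).congr fun m => by
      rw [hFnorm m, mul_one_div]
  have hswap := integral_tsum_of_summable_integral_norm hFint hsum
  have hpt : ∀ x ∈ Set.Ioi (0:ℝ),
      (∑' m : ℕ, F m x) = x ^ k * Real.exp (-s * x) / (1 - Real.exp (-x)) := by
    intro x hx
    have hx0 : (0:ℝ) < x := hx
    have h1 : Real.exp (-x) < 1 := Real.exp_lt_one_iff.mpr (by linarith)
    calc (∑' m : ℕ, F m x)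
        = ∑' m : ℕ, (x ^ k * Real.exp (-s * x)) * (Real.exp (-x)) ^ m := by
          refine tsum_congr fun m => ?_
          show x ^ k * Real.exp (-((m:ℝ) + s) * x) = _
          rw [ show (-(((m:ℝ)) + s) * x) = (-s * x) + (m:ℝ) * (-x) by ring, Real.exp_add,
            Real.exp_nat_mul, mul_assoc]
      _ = (x ^ k * Real.exp (-s * x)) * (1 - Real.exp (-x))⁻¹ := by
          rw [tsum_mul_left, tsum_geometric_of_lt_one (Real.exp_nonneg _) h1]
      _ = _ := by rw [div_eq_mul_inv]
  rw [← setIntegral_congr_fun measurableSet_Ioi hpt, ← hswap]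
  rw [tsum_congr hFval, ← tsum_mul_left]
  exact tsum_congr fun m => (mul_one_div _ _).symm

lemma integrableOn_main (k : ℕ) (hk : 1 ≤ k) {s : ℝ} (hs : 0 < s) :
    IntegrableOn (fun x : ℝ => x ^ k * Real.exp (-s * x) / (1 - Real.exp (-x)))
      (Set.Ioi 0) := by
  refine Integrable.mono
    (((integrableOn_pow_mul_exp (k-1) hs).add (integrableOn_pow_mul_exp k hs)))
    ?_ ?_
  · apply Measurable.aestronglyMeasurable
    fun_prop
  · filter_upwards [self_mem_ae_restrict measurableSet_Ioi] with x hx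
    have hx0 : (0:ℝ) < x := hx
    have h1 : Real.exp (-x) < 1 := Real.exp_lt_one_iff.mpr (by linarith)
    have hd : 0 < 1 - Real.exp (-x) := by linarith
    have hE : 0 < Real.exp (-s * x) := Real.exp_pos _
    have hle : Real.exp (-x) ≤ 1 / (1 + x) := by
      rw [Real.exp_neg, one_div]
      exact inv_anti₀ (by linarith) (by linarith [Real.add_one_le_exp x])
    have hd2 : x / (1 + x) ≤ 1 - Real.exp (-x) := by
      rw [div_le_iff₀ (by linarith)]
      have : (1 - Real.exp (-x)) * (1 + x) ≥ (1 - 1/(1+x)) * (1+x) := by nlinarith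
      calc x = (1 - 1/(1+x)) * (1+x) := by field_simp; ring
        _ ≤ _ := this
      
    have hxk : x ^ (k-1) * x = x ^ k := by
      rw [← pow_succ, Nat.sub_add_cancel hk]
    have hkey : x ^ k / (1 - Real.exp (-x)) ≤ x ^ (k-1) + x ^ k := by
      rw [div_le_iff₀ hd]
      have h3 : (x ^ (k-1) + x ^ k) * (x / (1+x)) = x ^ k := by
        rw [← hxk]; field_simp
      calc x ^ k = (x ^ (k-1) + x ^ k) * (x / (1+x)) := h3.symm
        _ ≤ (x ^ (k-1) + x ^ k) * (1 - Real.exp (-x)) :=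
            mul_le_mul_of_nonneg_left hd2
              (add_nonneg (pow_nonneg hx0.le _) (pow_nonneg hx0.le _))
    simp only [Pi.add_apply]
    rw [Real.norm_eq_abs, Real.norm_eq_abs,
      abs_of_nonneg (div_nonneg (mul_nonneg (pow_nonneg hx0.le _) (Real.exp_nonneg _)) hd.le),
      abs_of_nonneg (add_nonneg (mul_nonneg (pow_nonneg hx0.le _) (Real.exp_nonneg _))
        (mul_nonneg (pow_nonneg hx0.le _) (Real.exp_nonneg _)))]
    calc x ^ k * Real.exp (-s * x) / (1 - Real.exp (-x))
        = (x ^ k / (1 - Real.exp (-x))) * Real.exp (-s * x) := by ring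
      _ ≤ (x ^ (k-1) + x ^ k) * Real.exp (-s * x) :=
          mul_le_mul_of_nonneg_right hkey hE.le
      _ = x ^ (k-1) * Real.exp (-s * x) + x ^ k * Real.exp (-s * x) := by ring

/-- Evaluation of the archimedean integral `I₂` as a sum of Hurwitz-zeta values. -/
theorem archimedean_integral_I2 (lam μ a : ℝ) (hlam : 0 < lam) (hμ : 0 ≤ μ)
    (ha : a < 0) (n : ℕ) (hn : 2 ≤ n) :
    ∫ x in Set.Ioi (0 : ℝ),
        (∑ l ∈ Finset.Icc 2 n, (n.choose l : ℝ) * (-(1 - 2 * a) * lam * x) ^ (l - 1) /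
          (Nat.factorial (l - 1) : ℝ)) *
          Real.exp (-((1 - a) * lam + μ) * x) / (1 - Real.exp (-x)) =
      ∑ l ∈ Finset.Icc 2 n, (n.choose l : ℝ) * (-(1 - 2 * a) * lam) ^ (l - 1) *
        ∑' m : ℕ, 1 / ((m : ℝ) + (1 - a) * lam + μ) ^ l := by
  set s : ℝ := (1 - a) * lam + μ with hsdef
  have hs : 0 < s := by
    have : (0:ℝ) < (1 - a) * lam := by nlinarith
    simp only [hsdef]; linarith
  set c : ℝ := -(1 - 2 * a) * lam with hcdef
  have hint : ∀ l ∈ Finset.Icc 2 n, IntegrableOn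
      (fun x : ℝ => (n.choose l : ℝ) * c ^ (l-1) / (Nat.factorial (l-1) : ℝ) *
        (x ^ (l-1) * Real.exp (-s * x) / (1 - Real.exp (-x)))) (Set.Ioi 0) := by
    intro l hl
    have hl2 : 2 ≤ l := (Finset.mem_Icc.mp hl).1
    exact (integrableOn_main (l-1) (by omega) hs).const_mul _
  calc ∫ x in Set.Ioi (0 : ℝ),
        (∑ l ∈ Finset.Icc 2 n, (n.choose l : ℝ) * (c * x) ^ (l - 1) /
          (Nat.factorial (l - 1) : ℝ)) * Real.exp (-s * x) / (1 - Real.exp (-x))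
      = ∫ x in Set.Ioi (0:ℝ), ∑ l ∈ Finset.Icc 2 n,
          (n.choose l : ℝ) * c ^ (l-1) / (Nat.factorial (l-1) : ℝ) *
            (x ^ (l-1) * Real.exp (-s * x) / (1 - Real.exp (-x))) := by
        refine setIntegral_congr_fun measurableSet_Ioi (fun x hx => ?_)
        rw [Finset.sum_mul, Finset.sum_div]
        refine Finset.sum_congr rfl fun l hl => ?_
        rw [mul_pow]; ring
    _ = ∑ l ∈ Finset.Icc 2 n, ∫ x in Set.Ioi (0:ℝ),
          (n.choose l : ℝ) * c ^ (l-1) / (Nat.factorial (l-1) : ℝ) *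
            (x ^ (l-1) * Real.exp (-s * x) / (1 - Real.exp (-x))) :=
        integral_finset_sum _ hint
    _ = ∑ l ∈ Finset.Icc 2 n, (n.choose l : ℝ) * c ^ (l - 1) *
          ∑' m : ℕ, 1 / ((m : ℝ) + s) ^ l := by
        refine Finset.sum_congr rfl fun l hl => ?_
        have hl2 : 2 ≤ l := (Finset.mem_Icc.mp hl).1
        rw [integral_const_mul, key_integral (l-1) (by omega) hs,
          show l - 1 + 1 = l by omega]
        have hfac : ((Nat.factorial (l-1) : ℝ)) ≠ 0 := by positivity
        field_simp
    _ = _ := by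
        refine Finset.sum_congr rfl fun l hl => ?_
        congr 1
        exact tsum_congr fun m => by rw [add_assoc]
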